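/- If G is an undirected graph, then gn(G) ≥ |V(G)| − κ_f(G), where gn(G) is the asymptotic guessing number and κ_f(G) the fractional clique cover number. -/

import Mathlib

/-- A pure strategy for the guessing game on the digraph with edge relation `E`
and alphabet `Fin s`: each player `v` guesses based only on the values of its
in-neighbours. -/
structure GuessStrategy (V : Type*) (E : V → V → Prop) (s : ℕ) where
  f : V → (V → Fin s) → Fin s
  local_dep : ∀ v a b, (∀ u, E u v → a u = b u) → f v a = f v b

/-- The number of assignments on which every player guesses correctly. -/
noncomputable def winCount {V : Type*} [Fintype V] (E : V → V → Prop) (s : ℕ)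
    (F : GuessStrategy V E s) : ℕ :=
  Nat.card {a : V → Fin s // ∀ v, F.f v a = a v}

/-- The winning probability of strategy `F` in the guessing game `(G,s)`. -/
noncomputable def winP {V : Type*} [Fintype V] (E : V → V → Prop) (s : ℕ)
    (F : GuessStrategy V E s) : ℝ :=
  (winCount E s F : ℝ) / (s ^ Fintype.card V : ℕ)

/-- The maximum winning probability over all strategies. -/
noncomputable def maxWinP {V : Type*} [Fintype V] (E : V → V → Prop) (s : ℕ) : ℝ :=
  ⨆ F : GuessStrategy V E s, winP E s F

/-- The guessing number `gn(G,s) = |V(G)| + log_s (max winning probability)`. -/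
noncomputable def gn {V : Type*} [Fintype V] (E : V → V → Prop) (s : ℕ) : ℝ :=
  Fintype.card V + Real.logb s (maxWinP E s)

/-- The `t`-uniform blowup of a digraph: each vertex is replaced by `t` copies. -/
def blowup {V : Type*} (E : V → V → Prop) (t : ℕ) : V × Fin t → V × Fin t → Prop :=
  fun p q => E p.1 q.1

/-- The minimum clique cover number `κ(G)`: the least number of cliques into which the
vertex set of `G` can be partitioned. -/
noncomputable def cliqueCoverNum {V : Type*} [Fintype V] [DecidableEq V]
    (G : SimpleGraph V) : ℕ :=
  sInf {n | ∃ P : Finpartition (Finset.univ : Finset V),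
    P.parts.card = n ∧ ∀ p ∈ P.parts, G.IsClique (p : Set V)}

/-- A fractional clique cover of `G`: a weighting `w : K(G) → [0,1]` of the cliques with
total weight at least `1` on the cliques containing any given vertex. -/
def IsFracCliqueCover {V : Type*} [Fintype V] [DecidableEq V] (G : SimpleGraph V)
    (w : Finset V → ℝ) : Prop :=
  (∀ k, 0 ≤ w k ∧ w k ≤ 1) ∧ (∀ k, w k ≠ 0 → G.IsClique (k : Set V)) ∧
  ∀ v : V, 1 ≤ ∑ k ∈ Finset.univ.filter (fun k : Finset V => v ∈ k), w k

/-- A regular fractional clique cover: the total weight on the cliques containing any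
given vertex is exactly `1`. -/
def IsRegFracCliqueCover {V : Type*} [Fintype V] [DecidableEq V] (G : SimpleGraph V)
    (w : Finset V → ℝ) : Prop :=
  (∀ k, 0 ≤ w k ∧ w k ≤ 1) ∧ (∀ k, w k ≠ 0 → G.IsClique (k : Set V)) ∧
  ∀ v : V, ∑ k ∈ Finset.univ.filter (fun k : Finset V => v ∈ k), w k = 1

/-- The fractional clique cover number `κ_f(G)`. -/
noncomputable def fracCliqueCoverNum {V : Type*} [Fintype V] [DecidableEq V]
    (G : SimpleGraph V) : ℝ :=
  sInf {x : ℝ | ∃ w : Finset V → ℝ, IsFracCliqueCover G w ∧ x = ∑ k : Finset V, w k}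

/-- The `t`-uniform blowup of a simple graph. -/
def SimpleGraph.blowupG {V : Type*} (G : SimpleGraph V) (t : ℕ) :
    SimpleGraph (V × Fin t) where
  Adj p q := G.Adj p.1 q.1
  symm := ⟨fun _ _ h => G.adj_symm h⟩
  loopless := ⟨fun p h => G.irrefl h⟩


open Finset in
lemma count_ge {W : Type*} [Fintype W] [DecidableEq W] {m s : ℕ} [NeZero s]
    (g : W → Fin m) :
    s ^ Fintype.card W ≤
      Nat.card {b : W → Fin s // ∀ x, ∑ y ∈ univ.filter (fun y => g y = g x), b y = 0}
        * s ^ m := by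
  classical
  rcases isEmpty_or_nonempty W with hW | hW
  · have h1 : 0 < Nat.card {b : W → Fin s // ∀ x, ∑ y ∈ univ.filter (fun y => g y = g x), b y = 0} := by
      have : Nonempty {b : W → Fin s // ∀ x, ∑ y ∈ univ.filter (fun y => g y = g x), b y = 0} :=
        ⟨⟨fun _ => 0, fun x => (hW.elim x)⟩⟩
      exact Nat.card_pos
    have h2 : Fintype.card W = 0 := Fintype.card_eq_zero
    rw [h2, pow_zero]
    calc 1 ≤ Nat.card {b : W → Fin s // ∀ x, ∑ y ∈ univ.filter (fun y => g y = g x), b y = 0} := h1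
    _ ≤ _ := Nat.le_mul_of_pos_right _ (Nat.pow_pos (Nat.pos_of_ne_zero (NeZero.ne s)) : 0 < s ^ m)
  set r : W → W := fun x => Function.invFun g (g x) with hr
  have hr1 : ∀ x, g (r x) = g x := fun x => Function.invFun_eq ⟨x, rfl⟩
  have hr2 : ∀ x y, g x = g y → r x = r y := by
    intro x y h; simp only [hr, h]
  have hr3 : ∀ x, r (r x) = r x := fun x => hr2 _ _ (hr1 x)
  have keyA : ∀ (b : W → Fin s) (x : W), r x = x →
      ∑ y ∈ univ.filter (fun y => g y = g x), b y
        = b x + ∑ y ∈ univ.filter (fun y => g y = g x ∧ ¬ r y = y), b y := by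
    intro b x hx
    rw [← Finset.sum_filter_add_sum_filter_not (univ.filter (fun y => g y = g x))
      (fun y => r y = y) b]
    congr 1
    · have hone : (univ.filter (fun y => g y = g x)).filter (fun y => r y = y) = {x} := by
        ext y
        simp only [mem_filter, mem_univ, true_and, mem_singleton]
        constructor
        · rintro ⟨h1, h2⟩
          rw [← h2, hr2 _ _ h1, hx]
        · rintro rfl; exact ⟨rfl, hx⟩
      rw [hone, Finset.sum_singleton]
    · rw [Finset.filter_filter]
  set K := {x : W // ¬ r x = x} with hK
  set fe : (K → Fin s) → W → Fin s := fun f y => if h : r y = y then 0 else f ⟨y, h⟩ with hfe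
  set inv : (K → Fin s) → W → Fin s := fun f x =>
    if r x = x then - ∑ y ∈ univ.filter (fun y => g y = g x ∧ ¬ r y = y), fe f y
    else fe f x with hinv
  have hinv_eq : ∀ (f : K → Fin s) (y : W) (hy : ¬ r y = y), inv f y = f ⟨y, hy⟩ := by
    intro f y hy
    simp only [hinv, if_neg hy, hfe, dif_neg hy]
  have hPinv : ∀ f : K → Fin s, ∀ x,
      ∑ y ∈ univ.filter (fun y => g y = g x), inv f y = 0 := by
    intro f x
    have hxx : r (r x) = r x := hr3 x
    have hgx : g (r x) = g x := hr1 x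
    have h1 := keyA (inv f) (r x) hxx
    simp only [hgx] at h1
    rw [h1]
    have h2 : inv f (r x) = - ∑ y ∈ univ.filter (fun y => g y = g x ∧ ¬ r y = y), fe f y := by
      simp only [hinv, if_pos hxx, hgx]
    have h3 : ∑ y ∈ univ.filter (fun y => g y = g x ∧ ¬ r y = y), inv f y
        = ∑ y ∈ univ.filter (fun y => g y = g x ∧ ¬ r y = y), fe f y := by
      apply Finset.sum_congr rfl
      intro y hy
      simp only [mem_filter] at hy
      simp only [hinv, if_neg hy.2.2]
    rw [h2, h3, neg_add_cancel]
  let E : {b : W → Fin s // ∀ x, ∑ y ∈ univ.filter (fun y => g y = g x), b y = 0} ≃ (K → Fin s) :=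
    { toFun := fun b y => b.1 y.1
      invFun := fun f => ⟨inv f, hPinv f⟩
      left_inv := by
        rintro ⟨b, hb⟩
        apply Subtype.ext
        funext x
        by_cases hx : r x = x
        · show inv (fun y : K => b y.1) x = b x
          have hS : ∑ y ∈ univ.filter (fun y => g y = g x ∧ ¬ r y = y),
              fe (fun y : K => b y.1) y
              = ∑ y ∈ univ.filter (fun y => g y = g x ∧ ¬ r y = y), b y := by
            apply Finset.sum_congr rfl
            intro y hy
            simp only [mem_filter] at hy
            simp only [hfe, dif_neg hy.2.2]
          simp only [hinv, if_pos hx, hS]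
          have := keyA b x hx
          rw [hb x] at this
          exact (neg_eq_of_add_eq_zero_left this.symm)
        · show inv (fun y : K => b y.1) x = b x
          simp only [hinv, if_neg hx, hfe, dif_neg hx]
      right_inv := by
        intro f
        funext y
        show inv f y.1 = f y
        rw [hinv_eq f y.1 y.2]
    }
  have hcard : Nat.card {b : W → Fin s // ∀ x, ∑ y ∈ univ.filter (fun y => g y = g x), b y = 0}
      = s ^ Fintype.card K := by
    rw [Nat.card_congr E, Nat.card_eq_fintype_card, Fintype.card_fun, Fintype.card_fin]
  have hRle : Fintype.card {x : W // r x = x} ≤ m := by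
    have hinj : Function.Injective (fun x : {x : W // r x = x} => g x.1) := by
      rintro ⟨x, hx⟩ ⟨y, hy⟩ h
      apply Subtype.ext
      have h2 := hr2 x y h
      rw [hx, hy] at h2
      exact h2
    simpa using Fintype.card_le_of_injective _ hinj
  have hKcard : Fintype.card K = Fintype.card W - Fintype.card {x : W // r x = x} :=
    Fintype.card_subtype_compl _
  rw [hcard, ← pow_add]
  apply Nat.pow_le_pow_right (Nat.pos_of_ne_zero (NeZero.ne s))
  rw [hKcard]
  clear * - hRle
  omega


lemma winP_le_one {V : Type*} [Fintype V] (E : V → V → Prop) {s : ℕ} (hs : 0 < s)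
    (F : GuessStrategy V E s) : winP E s F ≤ 1 := by
  classical
  rw [winP, div_le_one (by positivity)]
  have h1 : winCount E s F ≤ s ^ Fintype.card V := by
    rw [winCount, Nat.card_eq_fintype_card]
    calc Fintype.card {a : V → Fin s // ∀ v, F.f v a = a v}
        ≤ Fintype.card (V → Fin s) := Fintype.card_subtype_le _
      _ = s ^ Fintype.card V := by rw [Fintype.card_fun, Fintype.card_fin]
  exact_mod_cast h1

lemma winP_nonneg {V : Type*} [Fintype V] (E : V → V → Prop) (s : ℕ)
    (F : GuessStrategy V E s) : 0 ≤ winP E s F := by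
  rw [winP]; positivity

open Finset in
lemma gn_ge_of_map {V : Type*} [Fintype V] [DecidableEq V] (G : SimpleGraph V)
    {s d m : ℕ} (hs : 2 ≤ s) (hd : 1 ≤ d)
    (g : V × Fin d → Fin m)
    (Hg : ∀ x y, g x = g y → x ≠ y → G.Adj x.1 y.1) :
    (Fintype.card V : ℝ) - (m : ℝ) / (d : ℝ) ≤ gn G.Adj (s ^ d) := by
  classical
  haveI : NeZero s := ⟨by omega⟩
  set e : Fin (s ^ d) ≃ (Fin d → Fin s) := finFunctionFinEquiv.symm with he
  set F : GuessStrategy V G.Adj (s ^ d) :=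
    { f := fun v a => e.symm (fun j =>
        - ∑ y ∈ univ.filter (fun y : V × Fin d => g y = g (v, j) ∧ ¬ y.1 = v), e (a y.1) y.2)
      local_dep := by
        intro v a b h
        apply congrArg
        funext j
        apply congrArg
        apply Finset.sum_congr rfl
        intro y hy
        simp only [mem_filter] at hy
        have hadj : G.Adj y.1 v := by
          have hyne : y ≠ (v, j) := by
            intro hE; exact hy.2.2 (by rw [hE])
          exact Hg y (v, j) hy.2.1 hyne
        rw [h y.1 hadj] } with hF
  have hsplit : ∀ (b : V × Fin d → Fin s) (v : V) (j : Fin d),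
      ∑ y ∈ univ.filter (fun y => g y = g (v, j)), b y
        = b (v, j) + ∑ y ∈ univ.filter (fun y => g y = g (v, j) ∧ ¬ y.1 = v), b y := by
    intro b v j
    rw [← Finset.sum_filter_add_sum_filter_not (univ.filter (fun y => g y = g (v, j)))
      (fun y => y.1 = v) b]
    congr 1
    · have hone : (univ.filter (fun y => g y = g (v, j))).filter (fun y => y.1 = v) = {(v, j)} := by
        ext y
        simp only [Finset.mem_filter, Finset.mem_univ, true_and, Finset.mem_singleton]
        constructor
        · rintro ⟨h1, h2⟩
          by_contra hne
          exact (Hg y (v, j) h1 hne).ne h2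
        · rintro rfl; exact ⟨rfl, rfl⟩
      rw [hone, Finset.sum_singleton]
    · rw [Finset.filter_filter]
  have hFf : ∀ (v : V) (a : V → Fin (s ^ d)), (F.f v a = a v ↔ ∀ j,
      - ∑ y ∈ univ.filter (fun y : V × Fin d => g y = g (v, j) ∧ ¬ y.1 = v), e (a y.1) y.2
        = e (a v) j) := by
    intro v a
    show e.symm _ = a v ↔ _
    rw [Equiv.symm_apply_eq, funext_iff]
  have hchar : ∀ a : V → Fin (s ^ d), (∀ v, F.f v a = a v) ↔
      ∀ x : V × Fin d, ∑ y ∈ univ.filter (fun y => g y = g x), e (a y.1) y.2 = 0 := by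
    intro a
    simp only [hFf]
    constructor
    · rintro h ⟨v, j⟩
      rw [hsplit (fun y => e (a y.1) y.2) v j]
      have h2 := h v j
      rw [← h2]
      exact neg_add_cancel _
    · intro h v j
      have h2 := h (v, j)
      rw [hsplit (fun y => e (a y.1) y.2) v j] at h2
      exact neg_eq_of_add_eq_zero_left h2
  -- transport the counting lemma
  have hwin : s ^ (Fintype.card V * d) ≤ winCount G.Adj (s ^ d) F * s ^ m := by
    have hcardW : Fintype.card (V × Fin d) = Fintype.card V * d := by simp
    have hcg := count_ge (s := s) g
    rw [hcardW] at hcg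
    refine le_trans hcg (Nat.mul_le_mul_right _ (le_of_eq ?_))
    rw [winCount]
    apply Nat.card_congr
    refine (Equiv.subtypeEquiv
      (((Equiv.refl V).arrowCongr e).trans (Equiv.curry V (Fin d) (Fin s)).symm) ?_).symm
    intro a
    rw [hchar a]
    constructor
    · intro h x
      rw [← h x]
      apply Finset.sum_congr rfl
      intro y _
      rfl
    · intro h x
      rw [← h x]
      apply Finset.sum_congr rfl
      intro y _
      rfl
  have hs0 : (0:ℝ) < (s : ℝ) := by exact_mod_cast (by omega : 0 < s)
  have hwinP : ((s:ℝ) ^ m)⁻¹ ≤ winP G.Adj (s ^ d) F := by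
    rw [winP]
    have hcast : (((s ^ d) ^ Fintype.card V : ℕ) : ℝ) = (s:ℝ) ^ (Fintype.card V * d) := by
      push_cast
      rw [← pow_mul, mul_comm]
    rw [hcast, le_div_iff₀ (by positivity), inv_mul_le_iff₀ (by positivity)]
    calc ((s:ℝ) ^ (Fintype.card V * d)) ≤ ((winCount G.Adj (s ^ d) F : ℝ) * (s:ℝ) ^ m) := by
          exact_mod_cast hwin
      _ = (s:ℝ) ^ m * (winCount G.Adj (s ^ d) F : ℝ) := by ring
  have hmax : ((s:ℝ) ^ m)⁻¹ ≤ maxWinP G.Adj (s ^ d) := by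
    refine le_trans hwinP (le_ciSup ?_ F)
    refine ⟨1, ?_⟩
    rintro x ⟨F', rfl⟩
    exact winP_le_one _ (by positivity) F'
  have hmaxpos : 0 < maxWinP G.Adj (s ^ d) := lt_of_lt_of_le (by positivity) hmax
  rw [gn]
  have hb : (1:ℝ) < ((s ^ d : ℕ) : ℝ) := by
    have : (1:ℕ) < s ^ d := by
      calc 1 < 2 := one_lt_two
        _ ≤ s := hs
        _ ≤ s ^ d := Nat.le_self_pow (by omega) s
    exact_mod_cast this
  have hlog : Real.logb ((s ^ d : ℕ) : ℝ) (((s:ℝ) ^ m)⁻¹)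
      ≤ Real.logb ((s ^ d : ℕ) : ℝ) (maxWinP G.Adj (s ^ d)) :=
    (Real.logb_le_logb hb (by positivity) hmaxpos).2 hmax
  have hlogval : Real.logb ((s ^ d : ℕ) : ℝ) (((s:ℝ) ^ m)⁻¹) = -((m:ℝ) / (d:ℝ)) := by
    have hlogs : (0:ℝ) < Real.log s := Real.log_pos (by exact_mod_cast hs)
    have hd0 : (0:ℝ) < (d:ℝ) := by exact_mod_cast hd
    rw [Real.logb, Real.log_inv, Real.log_pow]
    rw [show ((s ^ d : ℕ) : ℝ) = (s:ℝ) ^ d by push_cast; ring, Real.log_pow]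
    field_simp
  rw [hlogval] at hlog
  linarith


open Finset in
lemma exists_map_of_cover {V : Type*} [Fintype V] [DecidableEq V] (G : SimpleGraph V)
    (c : Finset V → ℕ) (d : ℕ)
    (hcov : ∀ v : V, d ≤ ∑ k ∈ univ.filter (fun k : Finset V => v ∈ k), c k)
    (hclique : ∀ k, c k ≠ 0 → G.IsClique (k : Set V)) :
    ∃ g : V × Fin d → Fin (∑ k : Finset V, c k),
      ∀ x y, g x = g y → x ≠ y → G.Adj x.1 y.1 := by
  classical
  have hcardI : Fintype.card (Σ k : Finset V, Fin (c k)) = ∑ k : Finset V, c k := by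
    simp [Fintype.card_sigma]
  have hemb : ∀ v : V, ∃ χ : Fin d ↪ (Σ k : Finset V, Fin (c k)), ∀ j, v ∈ (χ j).1 := by
    intro v
    have hcard : Fintype.card (Fin d) ≤ Fintype.card (Σ k : {k : Finset V // v ∈ k}, Fin (c k.1)) := by
      rw [Fintype.card_sigma, Fintype.card_fin]
      simp only [Fintype.card_fin]
      calc d ≤ ∑ k ∈ univ.filter (fun k : Finset V => v ∈ k), c k := hcov v
        _ = ∑ k : {k : Finset V // v ∈ k}, c k.1 := by
            rw [Finset.sum_subtype]
            intro k; simp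
    obtain ⟨ψ⟩ := Function.Embedding.nonempty_of_card_le hcard
    refine ⟨ψ.trans (Function.Embedding.sigmaMap
      (Function.Embedding.subtype (fun k : Finset V => v ∈ k))
      (fun a => Function.Embedding.refl _)), fun j => ?_⟩
    exact (ψ j).1.2
  choose χ hχ using hemb
  refine ⟨fun x => finCongr hcardI (Fintype.equivFin _ (χ x.1 x.2)), ?_⟩
  rintro ⟨v, i⟩ ⟨u, j⟩ hg hne
  have hg2 : χ v i = χ u j := by
    have := (finCongr hcardI).injective hg
    exact (Fintype.equivFin _).injective this
  by_cases hvu : v = u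
  · subst hvu
    exact absurd (by rw [(χ v).injective hg2]) hne
  · have h1 : v ∈ (χ v i).1 := hχ v i
    have h2 : u ∈ (χ v i).1 := by rw [hg2]; exact hχ u j
    have hc0 : c (χ v i).1 ≠ 0 := ((χ v i).2.pos).ne'
    exact hclique _ hc0 (Finset.mem_coe.2 h1) (Finset.mem_coe.2 h2) hvu

open Finset in
lemma main_eps {V : Type*} [Fintype V] [DecidableEq V] (G : SimpleGraph V)
    (ε : ℝ) (hε : 0 < ε) :
    ∃ d : ℕ, 1 ≤ d ∧ ∀ s : ℕ, 2 ≤ s →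
      (Fintype.card V : ℝ) - fracCliqueCoverNum G - ε ≤ gn G.Adj (s ^ d) := by
  classical
  -- the set of cover weights is nonempty
  have hne : {x : ℝ | ∃ w : Finset V → ℝ, IsFracCliqueCover G w ∧ x = ∑ k : Finset V, w k}.Nonempty := by
    refine ⟨∑ k : Finset V, (if k.card = 1 then (1:ℝ) else 0),
      fun k => (if k.card = 1 then (1:ℝ) else 0), ⟨?_, ?_, ?_⟩, rfl⟩
    · intro k; by_cases h : k.card = 1 <;> simp [h]
    · intro k hk
      by_cases h : k.card = 1
      · obtain ⟨v, rfl⟩ := Finset.card_eq_one.1 h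
        simpa using G.isClique_singleton v
      · simp [h] at hk
    · intro v
      have hmem : {v} ∈ univ.filter (fun k : Finset V => v ∈ k) := by simp
      have := Finset.single_le_sum
        (f := fun k : Finset V => (if k.card = 1 then (1:ℝ) else 0))
        (fun k _ => by by_cases h : k.card = 1 <;> simp [h]) hmem
      simpa using this
  obtain ⟨x, ⟨w, hw, rfl⟩, hx⟩ := Real.lt_sInf_add_pos hne (half_pos hε)
  have hx2 : (∑ k : Finset V, w k) < fracCliqueCoverNum G + ε / 2 := by
    rw [fracCliqueCoverNum]; exact hx
  set N := Fintype.card (Finset V) with hN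
  obtain ⟨d, hd1, hdN⟩ : ∃ d : ℕ, 1 ≤ d ∧ (N : ℝ) / d < ε / 2 := by
    refine ⟨⌈(2 * N : ℝ) / ε⌉₊ + 1, Nat.le_add_left 1 _, ?_⟩
    have hd0 : (0:ℝ) < ((⌈(2 * N : ℝ) / ε⌉₊ + 1 : ℕ) : ℝ) := by positivity
    rw [div_lt_iff₀ hd0]
    have h1 : (2 * N : ℝ) / ε < ((⌈(2 * N : ℝ) / ε⌉₊ + 1 : ℕ) : ℝ) :=
      lt_of_le_of_lt (Nat.le_ceil _) (by exact_mod_cast Nat.lt_succ_self _)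
    calc (N : ℝ) = (2 * N / ε) * (ε / 2) := by field_simp
      _ < ((⌈(2 * N : ℝ) / ε⌉₊ + 1 : ℕ) : ℝ) * (ε / 2) :=
          mul_lt_mul_of_pos_right h1 (half_pos hε)
      _ = ε / 2 * ((⌈(2 * N : ℝ) / ε⌉₊ + 1 : ℕ) : ℝ) := by ring
  have hd0 : (0:ℝ) < (d:ℝ) := by exact_mod_cast hd1
  set c : Finset V → ℕ := fun k => min d ⌈(d:ℝ) * w k⌉₊ with hc
  have hcw : ∀ k, (d:ℝ) * w k ≤ c k := by
    intro k
    rw [hc]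
    push_cast [Nat.cast_min]
    refine le_min ?_ (Nat.le_ceil _)
    exact mul_le_of_le_one_right (le_of_lt hd0) (hw.1 k).2
  have hcov : ∀ v : V, d ≤ ∑ k ∈ univ.filter (fun k : Finset V => v ∈ k), c k := by
    intro v
    have : (d:ℝ) ≤ ((∑ k ∈ univ.filter (fun k : Finset V => v ∈ k), c k : ℕ) : ℝ) := by
      push_cast
      calc (d:ℝ) = d * 1 := by ring
        _ ≤ d * ∑ k ∈ univ.filter (fun k : Finset V => v ∈ k), w k :=
            mul_le_mul_of_nonneg_left (hw.2.2 v) (le_of_lt hd0)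
        _ = ∑ k ∈ univ.filter (fun k : Finset V => v ∈ k), (d:ℝ) * w k := by
            rw [Finset.mul_sum]
        _ ≤ ∑ k ∈ univ.filter (fun k : Finset V => v ∈ k), ((c k : ℕ) : ℝ) :=
            Finset.sum_le_sum (fun k _ => hcw k)
    exact_mod_cast this
  have hclique : ∀ k, c k ≠ 0 → G.IsClique (k : Set V) := by
    intro k hk
    apply hw.2.1
    intro hwk
    apply hk
    rw [hc]
    simp [hwk]
  obtain ⟨g, hg⟩ := exists_map_of_cover G c d hcov hclique
  have hmle : ((∑ k : Finset V, c k : ℕ) : ℝ) ≤ d * (∑ k : Finset V, w k) + N := by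
    push_cast
    calc ∑ k : Finset V, ((c k : ℕ) : ℝ) ≤ ∑ k : Finset V, ((d:ℝ) * w k + 1) := by
          apply Finset.sum_le_sum
          intro k _
          rw [hc]
          calc ((min d ⌈(d:ℝ) * w k⌉₊ : ℕ) : ℝ) ≤ (⌈(d:ℝ) * w k⌉₊ : ℝ) := by
                exact_mod_cast Nat.min_le_right _ _
            _ ≤ (d:ℝ) * w k + 1 :=
                le_of_lt (Nat.ceil_lt_add_one (mul_nonneg (le_of_lt hd0) (hw.1 k).1))
      _ = d * (∑ k : Finset V, w k) + N := by
          rw [Finset.sum_add_distrib, ← Finset.mul_sum, Finset.sum_const, Finset.card_univ,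
            nsmul_eq_mul, mul_one, hN]
  refine ⟨d, hd1, fun s hs => ?_⟩
  have hbound := gn_ge_of_map G hs hd1 g hg
  refine le_trans ?_ hbound
  have hNd : (N : ℝ) < ε / 2 * d := by
    have := hdN
    rw [div_lt_iff₀ hd0] at this
    exact this
  have hmd : ((∑ k : Finset V, c k : ℕ):ℝ)/d ≤ fracCliqueCoverNum G + ε := by
    rw [div_le_iff₀ hd0]
    calc ((∑ k : Finset V, c k : ℕ):ℝ) ≤ d * (∑ k : Finset V, w k) + N := hmle
      _ ≤ d * (fracCliqueCoverNum G + ε/2) + N :=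
          add_le_add_left (mul_le_mul_of_nonneg_left (le_of_lt hx2) (le_of_lt hd0)) N
      _ ≤ (fracCliqueCoverNum G + ε) * d := by nlinarith
  linarith

/-- If `G` is an undirected graph, then the asymptotic guessing number
satisfies `gn(G) ≥ |V(G)| − κ_f(G)`. -/
theorem gn_ge_fracCliqueCover {V : Type*} [Fintype V] [DecidableEq V] (G : SimpleGraph V)
    (L : ℝ) (hL : Filter.Tendsto (fun s : ℕ => gn G.Adj s) Filter.atTop (nhds L)) :
    L ≥ Fintype.card V - fracCliqueCoverNum G := by
  refine le_of_forall_pos_le_add ?_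
  intro ε hε
  obtain ⟨d, hd1, hbound⟩ := main_eps G ε hε
  have hpow : Filter.Tendsto (fun s : ℕ => s ^ d) Filter.atTop Filter.atTop :=
    Filter.tendsto_atTop_mono (fun n => Nat.le_self_pow (by omega) n) Filter.tendsto_id
  have htend : Filter.Tendsto (fun s : ℕ => gn G.Adj (s ^ d)) Filter.atTop (nhds L) :=
    hL.comp hpow
  have hle : (Fintype.card V : ℝ) - fracCliqueCoverNum G - ε ≤ L :=
    ge_of_tendsto htend (Filter.eventually_atTop.2 ⟨2, fun s hs => hbound s hs⟩)
  linarith
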